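/- Let n, m ≥ 2, r = n/m > 0, and let x̄, ȳ ∈ ℝ, sX², sY² > 0. Then (μ, σX², σY²) with σX², σY² > 0 satisfies the three equations r(x̄−μ)σY² + (ȳ−μ)σX² = 0, σX² = (x̄−μ)² + sX², σY² = (ȳ−μ)² + sY² if and only if σX² = (x̄−μ)² + sX², σY² = (ȳ−μ)² + sY², and μ is a root of the cubic f(μ) = a₃μ³ + a₂μ² + a₁μ + a₀ where a₃ = 1+r, a₂ = −(2x̄+ȳ) − r(2ȳ+x̄), a₁ = x̄² + 2(1+r)x̄ȳ + rȳ² + sX² + r sY², a₀ = −x̄²ȳ − rȳ²x̄ − sX²ȳ − r sY² x̄. -/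
import Mathlib

theorem behrens_fisher_cubic_equiv
    (n m : ℕ) (hn : 2 ≤ n) (hm : 2 ≤ m)
    (xbar ybar sX2 sY2 : ℝ) (hsX : 0 < sX2) (hsY : 0 < sY2)
    (r : ℝ) (hr : r = (n : ℝ) / m) (hrpos : 0 < r)
    (μ σX2 σY2 : ℝ) (hσX : 0 < σX2) (hσY : 0 < σY2) :
    (r * (xbar - μ) * σY2 + (ybar - μ) * σX2 = 0 ∧
      σX2 = (xbar - μ)^2 + sX2 ∧ σY2 = (ybar - μ)^2 + sY2)
    ↔
    (σX2 = (xbar - μ)^2 + sX2 ∧ σY2 = (ybar - μ)^2 + sY2 ∧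
      (1 + r) * μ^3 + (-(2*xbar + ybar) - r*(2*ybar + xbar)) * μ^2
        + (xbar^2 + 2*(1+r)*xbar*ybar + r*ybar^2 + sX2 + r*sY2) * μ
        + (-(xbar^2*ybar) - r*ybar^2*xbar - sX2*ybar - r*sY2*xbar) = 0) := by
  constructor
  · rintro ⟨h, hX, hY⟩
    refine ⟨hX, hY, ?_⟩
    subst hX hY
    linear_combination -h
  · rintro ⟨hX, hY, h⟩
    refine ⟨?_, hX, hY⟩
    subst hX hY
    linear_combination -h
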